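/- Let r, γ, β, α₁, α₂ ∈ ℝ and N ∈ ℤ. For j = 1, 2 set a_j = α_j (1+N²)^{−r/2} and u_j(t,x) = a_j · exp(iNx) · exp(−it(N² + (γ+β)a_j²)) (these are exact solutions of the Benney system with v_j ≡ γ a_j²). Then for every t ∈ ℝ, ‖u_1(t,·) − u_2(t,·)‖²_{H^r} = (1+N²)^r | a_1 e^{−it(N²+(γ+β)a_1²)} − a_2 e^{−it(N²+(γ+β)a_2²)} |² = | α₁ − α₂ e^{ i t (γ+β)(α₁² − α₂²)(1+N²)^{−r} } |². In particular, if t (γ+β)(α₁² − α₂²)(1+N²)^{−r} = π/2, then ‖u_1(t,·) − u_2(t,·)‖²_{H^r} = α₁² + α₂². -/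

import Mathlib

open MeasureTheory Real

/-- Ill-posedness computation: for the exact plane-wave solutions
`u_j(t,x) = a_j e^{iNx} e^{−it(N² + (γ+β)a_j²)}` with `a_j = α_j (1+N²)^{−r/2}`,
the squared `H^r` norm of the difference at time `t` equals
`(1+N²)^r |a₁ e^{−it(N²+(γ+β)a₁²)} − a₂ e^{−it(N²+(γ+β)a₂²)}|²
 = |α₁ − α₂ e^{it(γ+β)(α₁²−α₂²)(1+N²)^{−r}}|²`; in particular it equals
`α₁² + α₂²` when `t(γ+β)(α₁²−α₂²)(1+N²)^{−r} = π/2`.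
Here the `H^r` norm is computed via the Fourier coefficients
`f̂(n) = (1/2π) ∫₀^{2π} f(x) e^{−inx} dx` of the `2π`-periodic difference. -/
theorem benney_illposedness_computation (r γ β α₁ α₂ : ℝ) (N : ℤ) (a₁ a₂ : ℝ)
    (ha₁ : a₁ = α₁ * (1 + (N : ℝ) ^ 2) ^ (-r / 2))
    (ha₂ : a₂ = α₂ * (1 + (N : ℝ) ^ 2) ^ (-r / 2)) :
    ∀ t : ℝ,
    let c₁ : ℂ := (a₁ : ℂ) *
      Complex.exp (-Complex.I * (t : ℂ) * (((N : ℂ)) ^ 2 + ((γ : ℂ) + (β : ℂ)) * (a₁ : ℂ) ^ 2))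
    let c₂ : ℂ := (a₂ : ℂ) *
      Complex.exp (-Complex.I * (t : ℂ) * (((N : ℂ)) ^ 2 + ((γ : ℂ) + (β : ℂ)) * (a₂ : ℂ) ^ 2))
    let f : ℝ → ℂ := fun x =>
      c₁ * Complex.exp (Complex.I * (N : ℂ) * (x : ℂ))
        - c₂ * Complex.exp (Complex.I * (N : ℂ) * (x : ℂ))
    let fhat : ℤ → ℂ := fun n =>
      (1 / (2 * (π : ℂ))) * ∫ x in (0:ℝ)..(2 * π), f x * Complex.exp (-Complex.I * (n : ℂ) * (x : ℂ))
    ((∑' n : ℤ, (1 + (n : ℝ) ^ 2) ^ r * ‖fhat n‖ ^ 2)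
        = (1 + (N : ℝ) ^ 2) ^ r * ‖c₁ - c₂‖ ^ 2)
    ∧ ((1 + (N : ℝ) ^ 2) ^ r * ‖c₁ - c₂‖ ^ 2
        = ‖(α₁ : ℂ) - (α₂ : ℂ) *
            Complex.exp (Complex.I * (t : ℂ) *
              ((((γ : ℝ) + β) * (α₁ ^ 2 - α₂ ^ 2) * (1 + (N : ℝ) ^ 2) ^ (-r) : ℝ) : ℂ))‖ ^ 2)
    ∧ (t * (γ + β) * (α₁ ^ 2 - α₂ ^ 2) * (1 + (N : ℝ) ^ 2) ^ (-r) = π / 2 →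
        (∑' n : ℤ, (1 + (n : ℝ) ^ 2) ^ r * ‖fhat n‖ ^ 2) = α₁ ^ 2 + α₂ ^ 2) := by
  intro t c₁ c₂ f fhat
  have hπ : (π : ℂ) ≠ 0 := Complex.ofReal_ne_zero.mpr Real.pi_ne_zero
  have hbase : (0 : ℝ) < 1 + (N : ℝ) ^ 2 := by positivity
  -- Fourier coefficients
  have hfhat : ∀ n : ℤ, fhat n = if n = N then c₁ - c₂ else 0 := by
    intro n
    have hconv : ∀ x : ℝ,
        f x * Complex.exp (-Complex.I * (n : ℂ) * (x : ℂ))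
          = (c₁ - c₂) * Complex.exp ((Complex.I * ((N : ℂ) - (n : ℂ))) * (x : ℂ)) := by
      intro x
      show (c₁ * Complex.exp (Complex.I * (N : ℂ) * (x : ℂ))
          - c₂ * Complex.exp (Complex.I * (N : ℂ) * (x : ℂ)))
            * Complex.exp (-Complex.I * (n : ℂ) * (x : ℂ)) = _
      rw [← sub_mul, mul_assoc, ← Complex.exp_add]
      congr 2
      ring
    show (1 / (2 * (π : ℂ))) * ∫ x in (0:ℝ)..(2 * π),
        f x * Complex.exp (-Complex.I * (n : ℂ) * (x : ℂ)) = _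
    simp only [hconv, intervalIntegral.integral_const_mul]
    by_cases hn : n = N
    · subst hn
      simp only [sub_self, mul_zero, zero_mul, Complex.exp_zero, if_pos rfl]
      rw [intervalIntegral.integral_const]
      simp only [sub_zero, Complex.real_smul, Complex.ofReal_mul, Complex.ofReal_ofNat,
        mul_one, if_true]
      field_simp
    · have hc : Complex.I * ((N : ℂ) - (n : ℂ)) ≠ 0 := by
        refine mul_ne_zero Complex.I_ne_zero (sub_ne_zero.mpr ?_)
        exact_mod_cast Ne.symm hn
      rw [integral_exp_mul_complex hc]
      have h1 : Complex.I * ((N : ℂ) - (n : ℂ)) * ((2 * π : ℝ) : ℂ)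
          = ((N - n : ℤ) : ℂ) * (2 * π * Complex.I) := by push_cast; ring
      rw [h1, Complex.exp_int_mul_two_pi_mul_I]
      simp [hn]
  -- first equality
  have h1 : (∑' n : ℤ, (1 + (n : ℝ) ^ 2) ^ r * ‖fhat n‖ ^ 2)
      = (1 + (N : ℝ) ^ 2) ^ r * ‖c₁ - c₂‖ ^ 2 := by
    rw [tsum_eq_single N (fun n hn => by rw [hfhat]; simp [hn])]
    rw [hfhat]; simp
  set s : ℝ := (1 + (N : ℝ) ^ 2) ^ (-r / 2) with hs
  have hspos : 0 < s := Real.rpow_pos_of_pos hbase _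
  have hs2 : s ^ 2 = (1 + (N : ℝ) ^ 2) ^ (-r) := by
    rw [sq, hs, ← Real.rpow_add hbase]; ring_nf
  -- second equality
  have h2 : (1 + (N : ℝ) ^ 2) ^ r * ‖c₁ - c₂‖ ^ 2
      = ‖(α₁ : ℂ) - (α₂ : ℂ) * Complex.exp (Complex.I * (t : ℂ) *
          ((((γ : ℝ) + β) * (α₁ ^ 2 - α₂ ^ 2) * (1 + (N : ℝ) ^ 2) ^ (-r) : ℝ) : ℂ))‖ ^ 2 := by
    have hkey : (α₁ : ℂ) - (α₂ : ℂ) * Complex.exp (Complex.I * (t : ℂ) *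
          ((((γ : ℝ) + β) * (α₁ ^ 2 - α₂ ^ 2) * (1 + (N : ℝ) ^ 2) ^ (-r) : ℝ) : ℂ))
        = ((s⁻¹ : ℝ) : ℂ) * Complex.exp (Complex.I * (t : ℂ) *
            (((N : ℂ)) ^ 2 + ((γ : ℂ) + (β : ℂ)) * (a₁ : ℂ) ^ 2)) * (c₁ - c₂) := by
      show _ = _ * (c₁ - c₂)
      simp only [c₁, c₂]
      have e1 : ((s⁻¹ : ℝ) : ℂ) * Complex.exp (Complex.I * (t : ℂ) *
            (((N : ℂ)) ^ 2 + ((γ : ℂ) + (β : ℂ)) * (a₁ : ℂ) ^ 2)) *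
          ((a₁ : ℂ) * Complex.exp (-Complex.I * (t : ℂ) *
            (((N : ℂ)) ^ 2 + ((γ : ℂ) + (β : ℂ)) * (a₁ : ℂ) ^ 2))) = (α₁ : ℂ) := by
        rw [mul_assoc, mul_comm (Complex.exp _), mul_assoc, ← Complex.exp_add, ← mul_assoc]
        have h0 : -Complex.I * (t : ℂ) * (((N : ℂ)) ^ 2 + ((γ : ℂ) + (β : ℂ)) * (a₁ : ℂ) ^ 2)
            + Complex.I * (t : ℂ) * (((N : ℂ)) ^ 2 + ((γ : ℂ) + (β : ℂ)) * (a₁ : ℂ) ^ 2) = 0 := by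
          ring
        rw [h0, Complex.exp_zero, mul_one, ← Complex.ofReal_mul]
        congr 1
        rw [ha₁]
        field_simp
      have hsa : ((s⁻¹ : ℝ) : ℂ) * (a₂ : ℂ) = (α₂ : ℂ) := by
        rw [← Complex.ofReal_mul]
        congr 1
        rw [ha₂]
        field_simp
      have e2 : ((s⁻¹ : ℝ) : ℂ) * Complex.exp (Complex.I * (t : ℂ) *
            (((N : ℂ)) ^ 2 + ((γ : ℂ) + (β : ℂ)) * (a₁ : ℂ) ^ 2)) *
          ((a₂ : ℂ) * Complex.exp (-Complex.I * (t : ℂ) *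
            (((N : ℂ)) ^ 2 + ((γ : ℂ) + (β : ℂ)) * (a₂ : ℂ) ^ 2)))
          = (α₂ : ℂ) * Complex.exp (Complex.I * (t : ℂ) *
              ((((γ : ℝ) + β) * (α₁ ^ 2 - α₂ ^ 2) * (1 + (N : ℝ) ^ 2) ^ (-r) : ℝ) : ℂ)) := by
        rw [mul_assoc, mul_comm (Complex.exp _), mul_assoc, ← Complex.exp_add, ← mul_assoc, hsa]
        congr 2
        have harg : ((((γ : ℝ) + β) * (α₁ ^ 2 - α₂ ^ 2) * (1 + (N : ℝ) ^ 2) ^ (-r) : ℝ) : ℂ)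
            = ((γ : ℂ) + (β : ℂ)) * ((a₁ : ℂ) ^ 2 - (a₂ : ℂ) ^ 2) := by
          rw [ha₁, ha₂, ← hs2, hs]
          push_cast
          ring
        rw [harg]
        ring
      conv_rhs => rw [mul_sub]
      rw [e1, e2]
    rw [hkey, norm_mul, norm_mul, mul_pow, mul_pow]
    have hnorm1 : ‖Complex.exp (Complex.I * (t : ℂ) *
        (((N : ℂ)) ^ 2 + ((γ : ℂ) + (β : ℂ)) * (a₁ : ℂ) ^ 2))‖ = 1 := by
      have harg : Complex.I * (t : ℂ) * (((N : ℂ)) ^ 2 + ((γ : ℂ) + (β : ℂ)) * (a₁ : ℂ) ^ 2)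
          = (((t * ((N : ℝ) ^ 2 + (γ + β) * a₁ ^ 2)) : ℝ) : ℂ) * Complex.I := by
        push_cast; ring
      rw [harg, Complex.norm_exp_ofReal_mul_I]
    have hsr : (s⁻¹) ^ 2 = (1 + (N : ℝ) ^ 2) ^ r := by
      rw [inv_pow, hs2, ← Real.rpow_neg hbase.le, neg_neg]
    rw [hnorm1, Complex.norm_real, Real.norm_eq_abs, abs_of_pos (inv_pos.mpr hspos), hsr]
    ring
  refine ⟨h1, h2, fun h => ?_⟩
  rw [h1, h2]
  have htφ : Complex.I * (t : ℂ) *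
      ((((γ : ℝ) + β) * (α₁ ^ 2 - α₂ ^ 2) * (1 + (N : ℝ) ^ 2) ^ (-r) : ℝ) : ℂ)
      = ((π / 2 : ℝ) : ℂ) * Complex.I := by
    rw [← h]
    push_cast
    ring
  rw [htφ, Complex.exp_mul_I]
  push_cast
  rw [Complex.cos_pi_div_two, Complex.sin_pi_div_two]
  simp only [zero_add, one_mul]
  rw [show ‖(α₁ : ℂ) - (α₂ : ℂ) * Complex.I‖ ^ 2
      = Complex.normSq ((α₁ : ℂ) - (α₂ : ℂ) * Complex.I) by
    rw [Complex.sq_norm]]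
  simp [Complex.normSq_apply, Complex.sub_re, Complex.sub_im, Complex.mul_re, Complex.mul_im]
  ring
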